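/- Every bounded finite potent endomorphism φ of a Hilbert space H is a Riesz operator: for every nonzero λ in the spectrum of φ, H decomposes as H = N(λ) ⊕ F(λ) where N(λ) and F(λ) are φ-invariant, N(λ) is finite-dimensional, F(λ) is closed, φ − λ·Id is nilpotent on N(λ), and φ − λ·Id is a homeomorphism of F(λ). -/

import Mathlib

open Finset

section RieszAux

variable {H : Type*} [NormedAddCommGroup H] [InnerProductSpace ℂ H]

theorem riesz_aux_decomp (T : H →L[ℂ] H) (μ : ℂ) (k : ℕ) :
    ∃ q : H →L[ℂ] H, Commute T q ∧ Commute (T - μ • 1) q ∧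
      (T - μ • 1) ^ k = (-μ) ^ k • (1 : H →L[ℂ] H) + T * q := by
  set x := T - μ • (1 : H →L[ℂ] H) with hx
  set y := (-μ) • (1 : H →L[ℂ] H) with hy
  have hxy : Commute x y := Commute.smul_right (Commute.one_right x) _
  have hTx : Commute T x := (Commute.refl T).sub_right ((Commute.one_right T).smul_right μ)
  have hTy : Commute T y := (Commute.one_right T).smul_right (-μ)
  set S := ∑ i ∈ range k, x ^ i * y ^ (k - 1 - i) with hS
  have hTS : Commute T S :=
    Commute.sum_right _ _ _ (fun i _ => (hTx.pow_right i).mul_right (hTy.pow_right _))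
  have hxS : Commute x S :=
    Commute.sum_right _ _ _ (fun i _ => ((Commute.refl x).pow_right i).mul_right (hxy.pow_right _))
  have hq := hxy.geom_sum₂_mul k
  have hxsuby : x - y = T := by rw [hx, hy]; simp
  rw [hxsuby] at hq
  have hyk : y ^ k = (-μ) ^ k • (1 : H →L[ℂ] H) := by rw [hy, smul_pow, one_pow]
  refine ⟨S, hTS, hxS, ?_⟩
  have h1 : x ^ k = S * T + y ^ k := sub_eq_iff_eq_add.mp hq.symm
  rw [h1, ← hTS.eq, hyk, add_comm]

theorem riesz_aux_ker_le (T : H →L[ℂ] H) {μ : ℂ} (hμ : μ ≠ 0) (k j : ℕ) :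
    LinearMap.ker ((T - μ • 1) ^ k).toLinearMap ≤ LinearMap.range (T ^ j).toLinearMap := by
  obtain ⟨q, hTq, hxq, hdk⟩ := riesz_aux_decomp T μ k
  set ψ := T - μ • (1 : H →L[ℂ] H) with hψ
  induction j with
  | zero => intro x _; exact ⟨x, by simp⟩
  | succ j ih =>
    intro x hxk
    have hx0 : (ψ ^ k) x = 0 := hxk
    have h1 : (-μ) ^ k • x + T (q x) = 0 := by
      have := congrArg (fun f : H →L[ℂ] H => f x) hdk
      simpa using this.symm.trans hx0
    set z : H := ((-μ) ^ k)⁻¹ • (-(q x)) with hz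
    have hxz : x = T z := by
      have hTqx : T (q x) = -((-μ) ^ k • x) := eq_neg_of_add_eq_zero_right h1
      have hne : (-μ) ^ k ≠ 0 := pow_ne_zero _ (neg_ne_zero.mpr hμ)
      rw [hz, map_smul, map_neg, hTqx, neg_neg, inv_smul_smul₀ hne]
    have hzker : z ∈ LinearMap.ker (ψ ^ k).toLinearMap := by
      have hcq : Commute (ψ ^ k) q := (hxq.symm.pow_right k).symm
      have : (ψ ^ k) (q x) = q ((ψ ^ k) x) := by
        have := congrArg (fun f : H →L[ℂ] H => f x) hcq.eq
        simpa using this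
      simp only [LinearMap.mem_ker, ContinuousLinearMap.coe_coe, hz, map_smul, map_neg, this, hx0, map_zero, neg_zero, smul_zero]
    obtain ⟨w, hw⟩ := ih hzker
    refine ⟨w, ?_⟩
    rw [ContinuousLinearMap.coe_coe] at hw ⊢
    rw [pow_succ', ContinuousLinearMap.mul_apply, hw, ← hxz]

theorem riesz_aux_ker_mono (ψ : H →L[ℂ] H) : Monotone fun k => LinearMap.ker (ψ ^ k).toLinearMap := by
  apply monotone_nat_of_le_succ
  intro k x hx
  have hx : (ψ ^ k) x = 0 := hx
  show (ψ ^ (k + 1)) x = 0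
  rw [pow_succ', ContinuousLinearMap.mul_apply, hx, map_zero]

theorem riesz_aux_ker_prop (ψ : H →L[ℂ] H) (m : ℕ)
    (h : LinearMap.ker (ψ ^ (m + 1)).toLinearMap = LinearMap.ker (ψ ^ m).toLinearMap) :
    ∀ k, m ≤ k → LinearMap.ker (ψ ^ k).toLinearMap = LinearMap.ker (ψ ^ m).toLinearMap := by
  intro k hk
  obtain ⟨i, rfl⟩ := Nat.exists_eq_add_of_le hk
  induction i with
  | zero => rfl
  | succ i ih =>
    apply le_antisymm
    · intro x hx
      have hx : (ψ ^ (m + (i + 1))) x = 0 := hx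
      have h1 : (ψ ^ (m + i)) (ψ x) = 0 := by
        rw [← ContinuousLinearMap.mul_apply, ← pow_succ]
        exact hx
      have h2 : ψ x ∈ LinearMap.ker (ψ ^ m).toLinearMap := (ih (Nat.le_add_right m i)) ▸ h1
      have h3 : x ∈ LinearMap.ker (ψ ^ (m + 1)).toLinearMap := by
        show (ψ ^ (m + 1)) x = 0
        rw [pow_succ, ContinuousLinearMap.mul_apply]
        exact h2
      rw [h] at h3
      exact h3
    · exact riesz_aux_ker_mono ψ (Nat.le_add_right m (i + 1))

theorem riesz_aux_exists_stab (ψ : H →L[ℂ] H) {V : Submodule ℂ H} [FiniteDimensional ℂ V]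
    (hle : ∀ k, LinearMap.ker (ψ ^ k).toLinearMap ≤ V) :
    ∃ m, 1 ≤ m ∧ ∀ k, m ≤ k → LinearMap.ker (ψ ^ k).toLinearMap = LinearMap.ker (ψ ^ m).toLinearMap := by
  haveI : ∀ k, FiniteDimensional ℂ (LinearMap.ker (ψ ^ k).toLinearMap) :=
    fun k => Submodule.finiteDimensional_of_le (hle k)
  have hex : ∃ m, LinearMap.ker (ψ ^ (m + 1)).toLinearMap = LinearMap.ker (ψ ^ m).toLinearMap := by
    by_contra hc
    push_neg at hc
    have hlt : ∀ m, LinearMap.ker (ψ ^ m).toLinearMap < LinearMap.ker (ψ ^ (m + 1)).toLinearMap := fun m =>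
      lt_of_le_of_ne (riesz_aux_ker_mono ψ (Nat.le_succ m)) (fun he => hc m he.symm)
    have hd : ∀ m, m ≤ Module.finrank ℂ (LinearMap.ker (ψ ^ m).toLinearMap) := by
      intro m
      induction m with
      | zero => exact Nat.zero_le _
      | succ m ih =>
        have := Submodule.finrank_lt_finrank_of_lt (hlt m)
        omega
    have h1 := hd (Module.finrank ℂ V + 1)
    have h2 : Module.finrank ℂ (LinearMap.ker (ψ ^ (Module.finrank ℂ V + 1)).toLinearMap) ≤
        Module.finrank ℂ V := Submodule.finrank_mono (hle _)
    omega
  obtain ⟨m, hm⟩ := hex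
  have hprop := riesz_aux_ker_prop ψ m hm
  refine ⟨m + 1, Nat.le_add_left 1 m, fun k hk => ?_⟩
  rw [hprop k (le_trans (Nat.le_succ m) hk), hprop (m + 1) (Nat.le_succ m)]

theorem riesz_aux_closed_sup [CompleteSpace H] (C S : Submodule ℂ H) (hC : IsClosed (C : Set H))
    [FiniteDimensional ℂ S] : IsClosed ((C ⊔ S : Submodule ℂ H) : Set H) := by
  haveI : CompleteSpace C := hC.completeSpace_coe
  set P : H →L[ℂ] H := C.subtypeL.comp (C.orthogonalProjectionOnto) with hP
  set Q : H →L[ℂ] H := ContinuousLinearMap.id ℂ H - P with hQ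
  have hPC : ∀ x : H, P x ∈ C := fun x => (C.orthogonalProjectionOnto x).2
  have hQc : ∀ c ∈ C, Q c = 0 := by
    intro c hc
    simp [hQ, hP, Submodule.starProjection_eq_self_iff.mpr hc]
  have hxQ : ∀ x : H, x - Q x ∈ C := by
    intro x
    have : x - Q x = P x := by simp [hQ]
    rw [this]; exact hPC x
  set S' : Submodule ℂ H := Submodule.map (Q : H →ₗ[ℂ] H) S with hS'
  haveI : FiniteDimensional ℂ S' := Module.Finite.map S (Q : H →ₗ[ℂ] H)
  have hkey : ((C ⊔ S : Submodule ℂ H) : Set H) = Q ⁻¹' (S' : Set H) := by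
    ext x
    constructor
    · intro hx
      obtain ⟨c, hc, s, hs, rfl⟩ := Submodule.mem_sup.mp hx
      show Q (c + s) ∈ S'
      rw [map_add, hQc c hc, zero_add]
      exact ⟨s, hs, rfl⟩
    · intro hx
      obtain ⟨s, hs, hQx⟩ := hx
      have hQx : Q s = Q x := hQx
      have hQs : Q s = s - P s := by simp [hQ]
      refine Submodule.mem_sup.mpr ⟨(x - Q x) - P s, Submodule.sub_mem C (hxQ x) (hPC s), s, hs, ?_⟩
      rw [← hQx, hQs]
      abel
  rw [hkey]
  exact (S'.closed_of_finiteDimensional).preimage Q.continuous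

theorem riesz_aux_range_one_sub [CompleteSpace H] (K : H →L[ℂ] H) (n : ℕ)
    (hK : FiniteDimensional ℂ (LinearMap.range (K ^ n).toLinearMap)) :
    IsClosed ((LinearMap.range (1 - K).toLinearMap : Submodule ℂ H) : Set H) := by
  set C : Submodule ℂ H := LinearMap.ker (K ^ n).toLinearMap with hC
  have hCclosed : IsClosed (C : Set H) := ContinuousLinearMap.isClosed_ker (K ^ n)
  set S : H →L[ℂ] H := ∑ i ∈ range n, K ^ i with hS
  have hcomm : Commute (K - 1) S :=
    Commute.sum_right _ _ _ (fun i _ => ((Commute.refl K).sub_left (Commute.one_left K)).pow_right i)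
  have hgeom : (1 - K) * S = 1 - K ^ n := by
    have h := geom_sum_mul K n
    have h2 : (K - 1) * S = K ^ n - 1 := by rw [hcomm.eq]; exact h
    have h3 : (1 - K) * S = -((K - 1) * S) := by noncomm_ring
    rw [h3, h2]; noncomm_ring
  have hCle : C ≤ LinearMap.range (1 - K).toLinearMap := by
    intro x hx
    have hx : (K ^ n) x = 0 := hx
    refine ⟨S x, ?_⟩
    have := congrArg (fun f : H →L[ℂ] H => f x) hgeom
    simpa [hx] using this
  have hCinv : ∀ c ∈ C, K c ∈ C := by
    intro c hc
    have hc : (K ^ n) c = 0 := hc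
    show (K ^ n) (K c) = 0
    rw [← ContinuousLinearMap.mul_apply, ((Commute.refl K).pow_left n).eq,
      ContinuousLinearMap.mul_apply, hc, map_zero]
  obtain ⟨W, hW⟩ := Submodule.exists_isCompl C
  haveI : FiniteDimensional ℂ W := by
    haveI := hK
    set f : W →ₗ[ℂ] LinearMap.range (K ^ n).toLinearMap :=
      ((K ^ n : H →L[ℂ] H) : H →ₗ[ℂ] H).restrict
        (fun x _ => LinearMap.mem_range_self _ x) with hf
    apply FiniteDimensional.of_injective f
    intro ⟨x, hx⟩ ⟨y, hy⟩ hxy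
    have h1 : (K ^ n) x = (K ^ n) y := congrArg Subtype.val hxy
    have h2 : x - y ∈ C := by
      show (K ^ n) (x - y) = 0
      rw [map_sub, h1, sub_self]
    have h3 : x - y ∈ W := Submodule.sub_mem W hx hy
    have h4 : x - y = 0 := Submodule.disjoint_def.mp hW.disjoint _ h2 h3
    exact Subtype.ext (sub_eq_zero.mp h4)
  have hEq : LinearMap.range (1 - K).toLinearMap = C ⊔ Submodule.map ((1 - K : H →L[ℂ] H) : H →ₗ[ℂ] H) W := by
    apply le_antisymm
    · rintro _ ⟨y, rfl⟩
      obtain ⟨c, hc, w, hw, rfl⟩ := Submodule.mem_sup.mp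
        (show y ∈ C ⊔ W by rw [hW.sup_eq_top]; trivial)
      rw [map_add]
      have h1mem : (1 - K) c ∈ C := by
        have : (1 - K) c = c - K c := by
          simp [ContinuousLinearMap.sub_apply]
        rw [this]
        exact Submodule.sub_mem C hc (hCinv c hc)
      exact Submodule.add_mem_sup h1mem (Submodule.mem_map_of_mem hw)
    · refine sup_le hCle ?_
      rintro _ ⟨w, hw, rfl⟩
      exact LinearMap.mem_range_self _ w
  rw [hEq]
  haveI : FiniteDimensional ℂ (Submodule.map ((1 - K : H →L[ℂ] H) : H →ₗ[ℂ] H) W) :=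
    Module.Finite.map W _
  exact riesz_aux_closed_sup _ _ hCclosed

theorem riesz_aux_range_closed [CompleteSpace H] (T : H →L[ℂ] H) (n : ℕ)
    (hn : FiniteDimensional ℂ (LinearMap.range (T ^ n).toLinearMap)) {μ : ℂ} (hμ : μ ≠ 0) (k : ℕ) :
    IsClosed ((LinearMap.range ((T - μ • 1) ^ k).toLinearMap : Submodule ℂ H) : Set H) := by
  obtain ⟨q, hTq, hψq, hdk⟩ := riesz_aux_decomp T μ k
  set c : ℂ := (-μ) ^ k with hcdef
  have hc : c ≠ 0 := pow_ne_zero _ (neg_ne_zero.mpr hμ)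
  set K : H →L[ℂ] H := -(c⁻¹ • (T * q)) with hKdef
  have hfact : (T - μ • 1) ^ k = c • (1 - K) := by
    rw [hdk, hKdef, smul_sub, smul_neg, smul_smul, mul_inv_cancel₀ hc, one_smul, sub_neg_eq_add]
  have hrange : LinearMap.range ((T - μ • 1) ^ k).toLinearMap = LinearMap.range (1 - K).toLinearMap := by
    apply le_antisymm
    · rintro _ ⟨y, rfl⟩
      refine ⟨c • y, ?_⟩
      rw [hfact]
      simp [ContinuousLinearMap.smul_apply, map_smul, smul_comm]
    · rintro _ ⟨y, rfl⟩
      refine ⟨c⁻¹ • y, ?_⟩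
      rw [hfact]
      simp only [ContinuousLinearMap.coe_coe, ContinuousLinearMap.smul_apply, map_smul, smul_smul, mul_inv_cancel₀ hc,
        inv_mul_cancel₀ hc, one_smul]
  have hKn : FiniteDimensional ℂ (LinearMap.range (K ^ n).toLinearMap) := by
    have hle : LinearMap.range (K ^ n).toLinearMap ≤ LinearMap.range (T ^ n).toLinearMap := by
      rintro _ ⟨y, rfl⟩
      have : K ^ n = (-c⁻¹) ^ n • (T ^ n * q ^ n) := by
        rw [hKdef, ← hTq.mul_pow, ← smul_pow, neg_smul]
      rw [this]
      simp only [ContinuousLinearMap.coe_coe, ContinuousLinearMap.smul_apply, ContinuousLinearMap.mul_apply]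
      exact Submodule.smul_mem _ _ ⟨q ^ n $ y, rfl⟩
    exact Submodule.finiteDimensional_of_le hle
  rw [hrange]
  exact riesz_aux_range_one_sub K n hKn

theorem riesz_aux_orth_range [CompleteSpace H] (T : H →L[ℂ] H) :
    (LinearMap.range (T).toLinearMap)ᗮ = LinearMap.ker (ContinuousLinearMap.adjoint T).toLinearMap := by
  ext x
  simp only [Submodule.mem_orthogonal, LinearMap.mem_ker, ContinuousLinearMap.coe_coe]
  constructor
  · intro h
    have h2 : ∀ y : H, inner ℂ (y : H) ((ContinuousLinearMap.adjoint T) x) = (0 : ℂ) := by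
      intro y
      rw [ContinuousLinearMap.adjoint_inner_right]
      exact h (T y) (LinearMap.mem_range_self _ y)
    have := h2 ((ContinuousLinearMap.adjoint T) x)
    rwa [inner_self_eq_zero] at this
  · rintro h _ ⟨y, rfl⟩
    rw [ContinuousLinearMap.coe_coe, ← ContinuousLinearMap.adjoint_inner_right, h, inner_zero_right]

theorem riesz_aux_adjoint_fr [CompleteSpace H] (S : H →L[ℂ] H)
    (hS : FiniteDimensional ℂ (LinearMap.range (S).toLinearMap)) :
    FiniteDimensional ℂ (LinearMap.range (ContinuousLinearMap.adjoint S).toLinearMap) := by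
  haveI := hS
  set R : Submodule ℂ H := LinearMap.range (S).toLinearMap with hR
  haveI : CompleteSpace R := (R.closed_of_finiteDimensional).completeSpace_coe
  have hcompl : R ⊔ Rᗮ = ⊤ := Submodule.sup_orthogonal_of_hasOrthogonalProjection
  have hle : LinearMap.range (ContinuousLinearMap.adjoint S).toLinearMap ≤
      Submodule.map ((ContinuousLinearMap.adjoint S : H →L[ℂ] H) : H →ₗ[ℂ] H) R := by
    rintro _ ⟨y, rfl⟩
    obtain ⟨r, hr, o, ho, rfl⟩ := Submodule.mem_sup.mp (hcompl ▸ Submodule.mem_top (x := y))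
    have ho0 : (ContinuousLinearMap.adjoint S) o = 0 := by
      have : o ∈ LinearMap.ker (ContinuousLinearMap.adjoint S).toLinearMap := by
        rw [← riesz_aux_orth_range]; exact ho
      exact this
    rw [map_add, ContinuousLinearMap.coe_coe, ho0, add_zero]
    exact Submodule.mem_map_of_mem hr
  haveI : FiniteDimensional ℂ
      (Submodule.map ((ContinuousLinearMap.adjoint S : H →L[ℂ] H) : H →ₗ[ℂ] H) R) :=
    Module.Finite.map R _
  exact Submodule.finiteDimensional_of_le hle

theorem riesz_aux_range_eq [CompleteSpace H] (ψ : H →L[ℂ] H) (k : ℕ)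
    (hclosed : IsClosed ((LinearMap.range (ψ ^ k).toLinearMap : Submodule ℂ H) : Set H)) :
    LinearMap.range (ψ ^ k).toLinearMap =
      (LinearMap.ker ((ContinuousLinearMap.adjoint ψ) ^ k).toLinearMap)ᗮ := by
  have h2 : ContinuousLinearMap.adjoint (ψ ^ k) = (ContinuousLinearMap.adjoint ψ) ^ k := by
    rw [← ContinuousLinearMap.star_eq_adjoint, ← ContinuousLinearMap.star_eq_adjoint, star_pow]
  haveI : CompleteSpace (LinearMap.range (ψ ^ k).toLinearMap) := hclosed.completeSpace_coe
  rw [← h2, ← riesz_aux_orth_range (ψ ^ k), Submodule.orthogonal_orthogonal]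

end RieszAux
/-- Every bounded finite potent endomorphism is a Riesz operator: every nonzero point
`μ` of the spectrum is a Riesz point, i.e. `H = N ⊕ F` with `N`, `F` invariant under
`φ`, `N` finite-dimensional, `F` closed, `φ - μ·Id` nilpotent on `N` and a
homeomorphism of `F`. -/
theorem riesz_aux_coe_pow {H : Type*} [NormedAddCommGroup H] [InnerProductSpace ℂ H]
    (f : H →L[ℂ] H) (n : ℕ) :
    ((f ^ n : H →L[ℂ] H) : H →ₗ[ℂ] H) = (f : H →ₗ[ℂ] H) ^ n := by
  induction n with
  | zero => rfl
  | succ n ih =>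
    rw [pow_succ, pow_succ, ← ih]
    rfl

/-- Every bounded finite potent endomorphism is a Riesz operator: every nonzero point
`μ` of the spectrum is a Riesz point, i.e. `H = N ⊕ F` with `N`, `F` invariant under
`φ`, `N` finite-dimensional, `F` closed, `φ - μ·Id` nilpotent on `N` and a
homeomorphism of `F`. -/
theorem finite_potent_is_riesz {H : Type*} [NormedAddCommGroup H]
    [InnerProductSpace ℂ H] [CompleteSpace H]
    (φ : H →L[ℂ] H)
    (hfp : ∃ n : ℕ, FiniteDimensional ℂ (LinearMap.range (φ.toLinearMap ^ n))) :
    ∀ μ ∈ spectrum ℂ φ, μ ≠ 0 →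
      ∃ (N F : Submodule ℂ H),
        (∀ x ∈ N, φ.toLinearMap x ∈ N) ∧ (∀ x ∈ F, φ.toLinearMap x ∈ F) ∧
        IsCompl N F ∧ FiniteDimensional ℂ N ∧ IsClosed (F : Set H) ∧
        ∃ (hN : ∀ x ∈ N, (φ.toLinearMap - μ • 1) x ∈ N)
          (hF : ∀ x ∈ F, (φ.toLinearMap - μ • 1) x ∈ F),
          IsNilpotent ((φ.toLinearMap - μ • 1).restrict hN) ∧
          ∃ e : F ≃L[ℂ] F, ∀ x : F, e x = (φ.toLinearMap - μ • 1).restrict hF x := by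
  intro μ _ hμ
  obtain ⟨n, hn⟩ := hfp
  -- transfer finite-dimensionality to the continuous-linear-map power
  have hnc : FiniteDimensional ℂ (LinearMap.range (φ ^ n).toLinearMap) := by
    have hfun : ⇑(φ ^ n) = ⇑(φ.toLinearMap ^ n) := by
      rw [← riesz_aux_coe_pow]; rfl
    have hEq : LinearMap.range (φ ^ n).toLinearMap = LinearMap.range (φ.toLinearMap ^ n) := by
      ext x
      simp only [LinearMap.mem_range]
      rw [ContinuousLinearMap.coe_coe, hfun]
    rw [hEq]; exact hn
  set ψ : H →L[ℂ] H := φ - μ • 1 with hψdef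
  have hψx : ∀ x : H, ψ x = (φ.toLinearMap - μ • 1) x := by
    intro x
    simp [hψdef]
  have hψpowx : ∀ (k : ℕ) (x : H), (ψ ^ k) x = ((φ.toLinearMap - μ • 1) ^ k) x := by
    intro k
    have h1 : (ψ : H →ₗ[ℂ] H) = φ.toLinearMap - μ • 1 := by
      ext x; exact hψx x
    have h2 : ⇑(ψ ^ k) = ⇑((φ.toLinearMap - μ • 1) ^ k) := by
      rw [← h1, ← riesz_aux_coe_pow]; rfl
    intro x; rw [h2]
  -- kernel chain
  have hkerle : ∀ k, LinearMap.ker (ψ ^ k).toLinearMap ≤ LinearMap.range (φ ^ n).toLinearMap :=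
    fun k => riesz_aux_ker_le φ hμ k n
  haveI := hnc
  obtain ⟨m1, hm1pos, hm1⟩ := riesz_aux_exists_stab ψ hkerle
  -- adjoint
  set φa : H →L[ℂ] H := ContinuousLinearMap.adjoint φ with hφadef
  set μa : ℂ := (starRingEnd ℂ) μ with hμadef
  have hμa : μa ≠ 0 := by
    simp [hμadef, hμ]
  set ψa : H →L[ℂ] H := φa - μa • 1 with hψadef
  have hψa : ContinuousLinearMap.adjoint ψ = ψa := by
    rw [← ContinuousLinearMap.star_eq_adjoint]
    rw [hψdef, hψadef, star_sub, star_smul, star_one, hφadef,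
      ContinuousLinearMap.star_eq_adjoint]
    rfl
  have hna : FiniteDimensional ℂ (LinearMap.range (φa ^ n).toLinearMap) := by
    have h2 : φa ^ n = ContinuousLinearMap.adjoint (φ ^ n) := by
      rw [hφadef, ← ContinuousLinearMap.star_eq_adjoint, ← ContinuousLinearMap.star_eq_adjoint,
        star_pow]
    rw [h2]
    exact riesz_aux_adjoint_fr _ hnc
  have hkerlea : ∀ k, LinearMap.ker (ψa ^ k).toLinearMap ≤ LinearMap.range (φa ^ n).toLinearMap :=
    fun k => riesz_aux_ker_le φa hμa k n
  haveI := hna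
  obtain ⟨m2, hm2pos, hm2⟩ := riesz_aux_exists_stab ψa hkerlea
  set m : ℕ := max m1 m2 with hmdef
  have hm1le : m1 ≤ m := le_max_left _ _
  have hm2le : m2 ≤ m := le_max_right _ _
  have hmpos : 1 ≤ m := le_trans hm1pos hm1le
  -- kernel stabilization at m
  have hker : ∀ k, m ≤ k → LinearMap.ker (ψ ^ k).toLinearMap = LinearMap.ker (ψ ^ m).toLinearMap := by
    intro k hk
    rw [hm1 k (le_trans hm1le hk), hm1 m hm1le]
  -- range closed
  have hclosed : ∀ k, IsClosed ((LinearMap.range (ψ ^ k).toLinearMap : Submodule ℂ H) : Set H) :=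
    fun k => riesz_aux_range_closed φ n hnc hμ k
  -- range stabilization at m
  have hrange : ∀ k, m ≤ k → LinearMap.range (ψ ^ k).toLinearMap = LinearMap.range (ψ ^ m).toLinearMap := by
    intro k hk
    rw [riesz_aux_range_eq ψ k (hclosed k), riesz_aux_range_eq ψ m (hclosed m), hψa,
      hm2 k (le_trans hm2le hk), hm2 m hm2le]
  set N : Submodule ℂ H := LinearMap.ker (ψ ^ m).toLinearMap with hNdef
  set F : Submodule ℂ H := LinearMap.range (ψ ^ m).toLinearMap with hFdef
  have hNfd : FiniteDimensional ℂ N := Submodule.finiteDimensional_of_le (hkerle m)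
  have hFclosed : IsClosed (F : Set H) := hclosed m
  -- commutation of φ with ψ^m
  have hcφψ : Commute φ (ψ ^ m) :=
    (((Commute.refl φ).sub_right ((Commute.one_right φ).smul_right μ))).pow_right m
  have hφψ : ∀ x : H, φ ((ψ ^ m) x) = (ψ ^ m) (φ x) := by
    intro x
    have := congrArg (fun f : H →L[ℂ] H => f x) hcφψ.eq
    simpa using this
  have hψψ : ∀ x : H, ψ ((ψ ^ m) x) = (ψ ^ m) (ψ x) := by
    intro x
    rw [← ContinuousLinearMap.mul_apply, ← pow_succ', pow_succ, ContinuousLinearMap.mul_apply]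
  -- invariance
  have hφN : ∀ x ∈ N, φ.toLinearMap x ∈ N := by
    intro x hx
    have hx : (ψ ^ m) x = 0 := hx
    show (ψ ^ m) (φ.toLinearMap x) = 0
    show (ψ ^ m) (φ x) = 0
    rw [← hφψ, hx, map_zero]
  have hφF : ∀ x ∈ F, φ.toLinearMap x ∈ F := by
    rintro _ ⟨y, rfl⟩
    exact ⟨φ y, (hφψ y).symm⟩
  have hψN : ∀ x ∈ N, (φ.toLinearMap - μ • 1) x ∈ N := by
    intro x hx
    have hx : (ψ ^ m) x = 0 := hx
    show (ψ ^ m) ((φ.toLinearMap - μ • 1) x) = 0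
    rw [← hψx, ← hψψ, hx, map_zero]
  have hψF : ∀ x ∈ F, (φ.toLinearMap - μ • 1) x ∈ F := by
    rintro _ ⟨y, rfl⟩
    refine ⟨ψ y, ?_⟩
    rw [ContinuousLinearMap.coe_coe, ← hψx, hψψ]
  -- IsCompl
  have hdisj : Disjoint N F := by
    rw [Submodule.disjoint_def]
    rintro x hxN ⟨y, rfl⟩
    have h0 : (ψ ^ (m + m)) y = 0 := by
      rw [pow_add, ContinuousLinearMap.mul_apply]
      exact hxN
    have h0' : y ∈ LinearMap.ker (ψ ^ (m + m)).toLinearMap := h0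
    rw [hker (m + m) (Nat.le_add_right m m)] at h0'
    have h1' : (ψ ^ m) y = 0 := h0'
    exact h1'
  have hcodis : Codisjoint N F := by
    rw [codisjoint_iff, eq_top_iff]
    intro x _
    have hx : (ψ ^ m) x ∈ LinearMap.range (ψ ^ (m + m)).toLinearMap := by
      rw [hrange (m + m) (Nat.le_add_right m m)]
      exact LinearMap.mem_range_self _ x
    obtain ⟨y, hy⟩ := hx
    have h1 : x - (ψ ^ m) y ∈ N := by
      show (ψ ^ m) (x - (ψ ^ m) y) = 0
      rw [ContinuousLinearMap.coe_coe] at hy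
      rw [map_sub, ← ContinuousLinearMap.mul_apply, ← pow_add, hy, sub_self]
    have h2 : (ψ ^ m) y ∈ F := LinearMap.mem_range_self _ y
    have : x = (x - (ψ ^ m) y) + (ψ ^ m) y := by abel
    rw [this]
    exact Submodule.add_mem_sup h1 h2
  refine ⟨N, F, hφN, hφF, ⟨hdisj, hcodis⟩, hNfd, hFclosed, hψN, hψF, ?_, ?_⟩
  · -- nilpotency
    refine ⟨m, ?_⟩
    rw [Module.End.pow_restrict]
    ext ⟨x, hx⟩
    have hx0 : (ψ ^ m) x = 0 := hx
    show ((φ.toLinearMap - μ • 1) ^ m) x = (0 : H)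
    rw [← hψpowx]
    exact hx0
  · -- homeomorphism of F
    haveI : CompleteSpace F := hFclosed.completeSpace_coe
    have hmemF : ∀ x : F, ψ ((F.subtypeL : F →L[ℂ] H) x) ∈ F := by
      intro ⟨x, hx⟩
      have := hψF x hx
      rwa [← hψx] at this
    set g : F →L[ℂ] F := (ψ.comp F.subtypeL).codRestrict F hmemF with hgdef
    have hgapp : ∀ x : F, (g x : H) = ψ (x : H) := fun x => rfl
    have hginj : LinearMap.ker (g).toLinearMap = ⊥ := by
      rw [LinearMap.ker_eq_bot']
      intro ⟨x, hxF⟩ hgx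
      have hψx0 : ψ x = 0 := congrArg Subtype.val hgx
      have hxker : x ∈ LinearMap.ker (ψ ^ m).toLinearMap := by
        have h1 : x ∈ LinearMap.ker (ψ ^ 1).toLinearMap := by
          show (ψ ^ 1) x = 0
          rw [pow_one]; exact hψx0
        exact riesz_aux_ker_mono ψ hmpos h1
      have := Submodule.disjoint_def.mp hdisj x hxker hxF
      exact Subtype.ext this
    have hgsurj : LinearMap.range (g).toLinearMap = ⊤ := by
      rw [LinearMap.range_eq_top]
      intro ⟨y, hyF⟩
      have hy1 : y ∈ LinearMap.range (ψ ^ (m + 1)).toLinearMap := by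
        rw [hrange (m + 1) (Nat.le_succ m)]
        exact hyF
      obtain ⟨z, hz⟩ := hy1
      refine ⟨⟨(ψ ^ m) z, LinearMap.mem_range_self _ z⟩, ?_⟩
      apply Subtype.ext
      show ψ ((ψ ^ m) z) = y
      rw [← ContinuousLinearMap.mul_apply, ← pow_succ']
      exact hz
    refine ⟨ContinuousLinearEquiv.ofBijective g hginj hgsurj, ?_⟩
    intro x
    apply Subtype.ext
    show (g x : H) = _
    rw [hgapp]
    have : ((φ.toLinearMap - μ • 1).restrict hψF x : H) = (φ.toLinearMap - μ • 1) (x : H) :=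
      rfl
    rw [this, hψx]
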